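/- arXiv:2103.04072 — 5 statements merged into one kernel-verified Lean document; each statement's English description precedes it below -/
import Mathlib

section
/- The function f₁(r) = (r - (1-r²)·artanh(r))/r³ is strictly increasing and convex on (0,1), with limits 2/3 as r→0⁺ and 1 as r→1⁻. -/
open Real Set Filter Topology

noncomputable def artanh (r : ℝ) : ℝ := (1/2) * Real.log ((1+r)/(1-r))

noncomputable def ellipticK (r : ℝ) : ℝ :=
  ∫ t in (0:ℝ)..(π/2), (1 - r^2 * Real.sin t ^ 2) ^ (-(1/2) : ℝ)

noncomputable def ellipticE (r : ℝ) : ℝ :=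
  ∫ t in (0:ℝ)..(π/2), (1 - r^2 * Real.sin t ^ 2) ^ ((1/2) : ℝ)
lemma artanh_zero : _root_.artanh 0 = 0 := by simp [_root_.artanh]

lemma artanh_eq {r : ℝ} (h1 : -1 < r) (h2 : r < 1) :
    _root_.artanh r = 1/2 * (Real.log (1+r) - Real.log (1-r)) := by
  rw [_root_.artanh, Real.log_div (by linarith) (by linarith)]

lemma hasDerivAt_artanh {r : ℝ} (h1 : -1 < r) (h2 : r < 1) :
    HasDerivAt _root_.artanh (1/(1-r^2)) r := by
  have hp : (0:ℝ) < 1 + r := by linarith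
  have hm : (0:ℝ) < 1 - r := by linarith
  have ev : (fun x => 1/2 * (Real.log (1+x) - Real.log (1-x))) =ᶠ[𝓝 r] _root_.artanh := by
    have : Ioo (-1:ℝ) 1 ∈ 𝓝 r := Ioo_mem_nhds h1 h2
    filter_upwards [this] with x hx
    exact (artanh_eq hx.1 hx.2).symm
  have ha : HasDerivAt (fun x : ℝ => Real.log (1+x)) (1/(1+r)) r := by
    have := ((hasDerivAt_id r).const_add (1:ℝ)).log (by simp; linarith)
    simpa using this
  have hb : HasDerivAt (fun x : ℝ => Real.log (1-x)) (-1/(1-r)) r := by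
    have := ((hasDerivAt_id r).const_sub (1:ℝ)).log (by simp; linarith)
    simpa using this
  have := ((ha.sub hb).const_mul (1/2:ℝ))
  have h2' : HasDerivAt (fun x => 1/2 * (Real.log (1+x) - Real.log (1-x)))
      (1/2 * (1/(1+r) - -1/(1-r))) r := this
  have := h2'.congr_of_eventuallyEq ev.symm
  refine this.congr_deriv ?_
  have h2r : 1 - r^2 ≠ 0 := by nlinarith
  field_simp
  ring

/-- If v 0 = 0 and v' > 0 on (0,1) (v differentiable on [0,1)), then v > 0 on (0,1). -/
lemma pos_of_deriv_pos {v v' : ℝ → ℝ}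
    (hd : ∀ x ∈ Ico (0:ℝ) 1, HasDerivAt v (v' x) x) (h0 : v 0 = 0)
    (hpos : ∀ x ∈ Ioo (0:ℝ) 1, 0 < v' x) {r : ℝ} (hr : r ∈ Ioo (0:ℝ) 1) : 0 < v r := by
  have mono : StrictMonoOn v (Ico 0 1) := by
    apply strictMonoOn_of_deriv_pos (convex_Ico 0 1)
    · exact fun x hx => (hd x hx).continuousAt.continuousWithinAt
    · intro x hx
      rw [interior_Ico] at hx
      rw [(hd x ⟨hx.1.le, hx.2⟩).deriv]
      exact hpos x hx
  have := mono (left_mem_Ico.2 one_pos) ⟨hr.1.le, hr.2⟩ hr.1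
  rwa [h0] at this

/-- nonneg version on [0,b] -/
lemma nonneg_of_deriv_nonneg {b : ℝ} (hb : 0 < b) {v v' : ℝ → ℝ}
    (hd : ∀ x ∈ Icc (0:ℝ) b, HasDerivAt v (v' x) x) (h0 : v 0 = 0)
    (hpos : ∀ x ∈ Ioo (0:ℝ) b, 0 ≤ v' x) {r : ℝ} (hr : r ∈ Icc (0:ℝ) b) : 0 ≤ v r := by
  have mono : MonotoneOn v (Icc 0 b) := by
    apply monotoneOn_of_deriv_nonneg (convex_Icc 0 b)
    · exact fun x hx => (hd x hx).continuousAt.continuousWithinAt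
    · intro x hx
      rw [interior_Icc] at hx
      exact (hd x ⟨hx.1.le, hx.2.le⟩).differentiableAt.differentiableWithinAt
    · intro x hx
      rw [interior_Icc] at hx
      rw [(hd x ⟨hx.1.le, hx.2.le⟩).deriv]
      exact hpos x hx
  have := mono (left_mem_Icc.2 hb.le) hr hr.1
  rwa [h0] at this

-- A : artanh r - r
lemma hasDerivAt_A {r : ℝ} (h1 : -1 < r) (h2 : r < 1) :
    HasDerivAt (fun x => _root_.artanh x - x) (r^2/(1-r^2)) r := by
  have h2r : 1 - r^2 ≠ 0 := by nlinarith
  have := (hasDerivAt_artanh h1 h2).sub (hasDerivAt_id r)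
  refine this.congr_deriv ?_
  field_simp
  ring

lemma A_pos {r : ℝ} (hr : r ∈ Ioo (0:ℝ) 1) : 0 < _root_.artanh r - r := by
  refine pos_of_deriv_pos (fun x hx => hasDerivAt_A (by linarith [hx.1]) hx.2)
    (by simp [_root_.artanh_zero]) (fun x hx => ?_) hr
  have : (0:ℝ) < 1 - x^2 := by nlinarith [hx.1, hx.2]
  have hx0 : x ≠ 0 := ne_of_gt hx.1
  positivity

-- B : r/(1-r^2) - artanh r
lemma hasDerivAt_B {r : ℝ} (h1 : -1 < r) (h2 : r < 1) :
    HasDerivAt (fun x => x/(1-x^2) - _root_.artanh x) (2*r^2/(1-r^2)^2) r := by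
  have h2r : 1 - r^2 ≠ 0 := by nlinarith
  have hq : HasDerivAt (fun x : ℝ => x/(1-x^2))
      ((1*(1-r^2) - r*(0 - 2*r^1))/(1-r^2)^2) r :=
    (hasDerivAt_id r).div ((hasDerivAt_const r 1).sub (hasDerivAt_pow 2 r)) h2r
  have := hq.sub (hasDerivAt_artanh h1 h2)
  refine this.congr_deriv ?_
  field_simp
  ring

lemma B_pos {r : ℝ} (hr : r ∈ Ioo (0:ℝ) 1) : 0 < r/(1-r^2) - _root_.artanh r := by
  refine pos_of_deriv_pos (fun x hx => hasDerivAt_B (by linarith [hx.1]) hx.2)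
    (by simp [_root_.artanh_zero]) (fun x hx => ?_) hr
  have : (0:ℝ) < 1 - x^2 := by nlinarith [hx.1, hx.2]
  have hx0 : x ≠ 0 := ne_of_gt hx.1
  positivity

-- h : (3-r^2) * artanh r - 3r,  h' = 2r(r/(1-r^2) - artanh r)
lemma hasDerivAt_h {r : ℝ} (h1 : -1 < r) (h2 : r < 1) :
    HasDerivAt (fun x => (3-x^2) * _root_.artanh x - 3*x)
      (2*r*(r/(1-r^2) - _root_.artanh r)) r := by
  have h2r : 1 - r^2 ≠ 0 := by nlinarith
  have hq := (((hasDerivAt_const r (3:ℝ)).sub (hasDerivAt_pow 2 r)).mul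
    (hasDerivAt_artanh h1 h2)).sub ((hasDerivAt_id r).const_mul (3:ℝ))
  refine hq.congr_deriv ?_
  simp only [Pi.sub_apply]
  field_simp
  ring

lemma h_pos {r : ℝ} (hr : r ∈ Ioo (0:ℝ) 1) : 0 < (3-r^2) * _root_.artanh r - 3*r := by
  refine pos_of_deriv_pos (fun x hx => hasDerivAt_h (by linarith [hx.1]) hx.2)
    (by simp [_root_.artanh_zero]) (fun x hx => ?_) hr
  have := B_pos hx
  have := hx.1
  positivity

-- q : artanh r - (r-2r^3)/(1-r^2)^2,  q' = (r^2+3r^4)/(1-r^2)^3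
lemma hasDerivAt_q {r : ℝ} (h1 : -1 < r) (h2 : r < 1) :
    HasDerivAt (fun x => _root_.artanh x - (x - 2*x^3)/(1-x^2)^2)
      ((r^2 + 3*r^4)/(1-r^2)^3) r := by
  have h2r : 1 - r^2 ≠ 0 := by nlinarith
  have h2r' : (1 - r^2)^2 ≠ 0 := pow_ne_zero 2 h2r
  have hnum : HasDerivAt (fun x : ℝ => x - 2*x^3) (1 - 2*(3*r^2)) r := by
    exact (hasDerivAt_id' r).sub (((hasDerivAt_pow 3 r)).const_mul (2:ℝ))
  have hden : HasDerivAt (fun x : ℝ => (1-x^2)^2) (2*(1-r^2)^1 * (0 - 2*r^1)) r :=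
    (show HasDerivAt (fun x : ℝ => 1 - x^2) (0 - 2*r^1) r from
        (hasDerivAt_const r 1).sub (hasDerivAt_pow 2 r)).pow 2
  have hq := hnum.div hden h2r'
  have := (hasDerivAt_artanh h1 h2).sub hq
  refine this.congr_deriv ?_
  field_simp
  ring

lemma q_pos {r : ℝ} (hr : r ∈ Ioo (0:ℝ) 1) : 0 < _root_.artanh r - (r - 2*r^3)/(1-r^2)^2 := by
  refine pos_of_deriv_pos (fun x hx => hasDerivAt_q (by linarith [hx.1]) hx.2)
    (by simp [_root_.artanh_zero]) (fun x hx => ?_) hr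
  have : (0:ℝ) < 1 - x^2 := by nlinarith [hx.1, hx.2]
  have hx0 : x ≠ 0 := ne_of_gt hx.1
  have h4 : (0:ℝ) < x^2 + 3*x^4 := by positivity
  positivity

-- p : 2r^3/(1-r^2) + 12r - (12-2r^2) * artanh r,  p' = 4r * q r
lemma hasDerivAt_p {r : ℝ} (h1 : -1 < r) (h2 : r < 1) :
    HasDerivAt (fun x => 2*x^3/(1-x^2) + 12*x - (12 - 2*x^2) * _root_.artanh x)
      (4*r*(_root_.artanh r - (r - 2*r^3)/(1-r^2)^2)) r := by
  have h2r : 1 - r^2 ≠ 0 := by nlinarith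
  have hq1 : HasDerivAt (fun x : ℝ => 2*x^3/(1-x^2))
      ((2*(3*r^2)*(1-r^2) - 2*r^3*(0 - 2*r^1))/(1-r^2)^2) r :=
    ((hasDerivAt_pow 3 r).const_mul (2:ℝ)).div
      ((hasDerivAt_const r 1).sub (hasDerivAt_pow 2 r)) h2r
  have hq2 := (hq1.add ((hasDerivAt_id r).const_mul (12:ℝ))).sub
    ((((hasDerivAt_const r (12:ℝ)).sub ((hasDerivAt_pow 2 r).const_mul (2:ℝ)))).mul
      (hasDerivAt_artanh h1 h2))
  refine hq2.congr_deriv ?_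
  simp only [Pi.sub_apply]
  field_simp
  ring

lemma p_pos {r : ℝ} (hr : r ∈ Ioo (0:ℝ) 1) :
    0 < 2*r^3/(1-r^2) + 12*r - (12 - 2*r^2) * _root_.artanh r := by
  refine pos_of_deriv_pos (fun x hx => hasDerivAt_p (by linarith [hx.1]) hx.2)
    (by simp [_root_.artanh_zero]) (fun x hx => ?_) hr
  have := q_pos hx
  have := hx.1
  positivity

-- derivative of f
lemma hasDerivAt_f {r : ℝ} (h0 : 0 < r) (h2 : r < 1) :
    HasDerivAt (fun x : ℝ => (x - (1 - x^2) * _root_.artanh x) / x^3)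
      (((3-r^2) * _root_.artanh r - 3*r)/r^4) r := by
  have h1 : (-1:ℝ) < r := by linarith
  have h2r : 1 - r^2 ≠ 0 := by nlinarith
  have hr0 : r ≠ 0 := ne_of_gt h0
  have hr3 : r^3 ≠ 0 := pow_ne_zero 3 hr0
  have hnum : HasDerivAt (fun x : ℝ => x - (1 - x^2) * _root_.artanh x)
      (1 - ((0 - 2*r^1) * _root_.artanh r + (1 - r^2) * (1/(1-r^2)))) r :=
    (hasDerivAt_id r).sub (((hasDerivAt_const r 1).sub (hasDerivAt_pow 2 r)).mul
      (hasDerivAt_artanh h1 h2))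
  have := hnum.div (hasDerivAt_pow 3 r) hr3
  refine this.congr_deriv ?_
  field_simp
  ring

lemma hasDerivAt_f' {r : ℝ} (h0 : 0 < r) (h2 : r < 1) :
    HasDerivAt (fun x : ℝ => ((3-x^2) * _root_.artanh x - 3*x)/x^4)
      ((2*r^3/(1-r^2) + 12*r - (12 - 2*r^2) * _root_.artanh r)/r^5) r := by
  have h1 : (-1:ℝ) < r := by linarith
  have h2r : 1 - r^2 ≠ 0 := by nlinarith
  have hr0 : r ≠ 0 := ne_of_gt h0
  have hr4 : r^4 ≠ 0 := pow_ne_zero 4 hr0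
  have := (hasDerivAt_h h1 h2).div (hasDerivAt_pow 4 r) hr4
  refine this.congr_deriv ?_
  field_simp
  ring

lemma f'_pos {r : ℝ} (hr : r ∈ Ioo (0:ℝ) 1) : 0 < ((3-r^2) * _root_.artanh r - 3*r)/r^4 := by
  have := h_pos hr
  have hr0 : r ≠ 0 := ne_of_gt hr.1
  positivity

lemma mono_f : StrictMonoOn (fun r : ℝ => (r - (1 - r^2) * _root_.artanh r) / r^3) (Ioo 0 1) := by
  apply strictMonoOn_of_hasDerivWithinAt_pos (f' := fun r => ((3-r^2) * _root_.artanh r - 3*r)/r^4)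
    (convex_Ioo 0 1)
  · exact fun x hx => (hasDerivAt_f hx.1 hx.2).continuousAt.continuousWithinAt
  · intro x hx
    rw [interior_Ioo] at hx
    exact (hasDerivAt_f hx.1 hx.2).hasDerivWithinAt
  · intro x hx
    rw [interior_Ioo] at hx
    exact f'_pos hx

lemma convex_f : ConvexOn ℝ (Ioo 0 1) (fun r : ℝ => (r - (1 - r^2) * _root_.artanh r) / r^3) := by
  apply convexOn_of_hasDerivWithinAt2_nonneg
    (f' := fun r => ((3-r^2) * _root_.artanh r - 3*r)/r^4)
    (f'' := fun r => (2*r^3/(1-r^2) + 12*r - (12 - 2*r^2) * _root_.artanh r)/r^5)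
    (convex_Ioo 0 1)
  · exact fun x hx => (hasDerivAt_f hx.1 hx.2).continuousAt.continuousWithinAt
  · intro x hx
    rw [interior_Ioo] at hx
    exact (hasDerivAt_f hx.1 hx.2).hasDerivWithinAt
  · intro x hx
    rw [interior_Ioo] at hx
    exact (hasDerivAt_f' hx.1 hx.2).hasDerivWithinAt
  · intro x hx
    rw [interior_Ioo] at hx
    have hx0 := hx.1
    exact le_of_lt (div_pos (p_pos hx) (by positivity))

-- G : lower bound numerator
lemma hasDerivAt_G {r : ℝ} (h1 : -1 < r) (h2 : r < 1) :
    HasDerivAt (fun x : ℝ => (x - (1 - x^2) * _root_.artanh x) - (2/3)*x^3)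
      (2*r*(_root_.artanh r - r)) r := by
  have h2r : 1 - r^2 ≠ 0 := by nlinarith
  have hnum : HasDerivAt (fun x : ℝ => x - (1 - x^2) * _root_.artanh x)
      (1 - ((0 - 2*r^1) * _root_.artanh r + (1 - r^2) * (1/(1-r^2)))) r :=
    (hasDerivAt_id r).sub (((hasDerivAt_const r 1).sub (hasDerivAt_pow 2 r)).mul
      (hasDerivAt_artanh h1 h2))
  have := hnum.sub ((hasDerivAt_pow 3 r).const_mul (2/3:ℝ))
  refine this.congr_deriv ?_
  field_simp
  ring

lemma G_pos {r : ℝ} (hr : r ∈ Ioo (0:ℝ) 1) :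
    0 < (r - (1 - r^2) * _root_.artanh r) - (2/3)*r^3 := by
  refine pos_of_deriv_pos (fun x hx => hasDerivAt_G (by linarith [hx.1]) hx.2)
    (by simp [_root_.artanh_zero]) (fun x hx => ?_) hr
  have := A_pos hx
  have := hx.1
  positivity

-- C : artanh r - r ≤ (4/3) r^3 on [0, 1/2]
lemma C_nonneg {r : ℝ} (hr : r ∈ Icc (0:ℝ) (1/2)) :
    0 ≤ (4/3)*r^3 - (_root_.artanh r - r) := by
  refine nonneg_of_deriv_nonneg one_half_pos
    (v := fun x => (4/3)*x^3 - (_root_.artanh x - x))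
    (v' := fun x => 4*x^2 - x^2/(1-x^2))
    (fun x hx => ?_) (by simp [_root_.artanh_zero]) (fun x hx => ?_) hr
  · have h1 : (-1:ℝ) < x := by linarith [hx.1]
    have h2 : x < 1 := by linarith [hx.2]
    have := ((hasDerivAt_pow 3 x).const_mul (4/3:ℝ)).sub (hasDerivAt_A h1 h2)
    refine this.congr_deriv ?_
    push_cast
    ring
  · have hx2 : (0:ℝ) < 1 - x^2 := by nlinarith [hx.1, hx.2]
    have hq : x^2 ≤ 1/4 := by nlinarith [hx.1.le, hx.2.le]
    have : x^2/(1-x^2) ≤ 4*x^2 := by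
      rw [div_le_iff₀ hx2]
      nlinarith [sq_nonneg x]
    linarith

-- D : upper bound numerator
lemma D_nonneg {r : ℝ} (hr : r ∈ Icc (0:ℝ) (1/2)) :
    0 ≤ (8/15)*r^5 - ((r - (1 - r^2) * _root_.artanh r) - (2/3)*r^3) := by
  refine nonneg_of_deriv_nonneg one_half_pos
    (v := fun x => (8/15)*x^5 - ((x - (1 - x^2) * _root_.artanh x) - (2/3)*x^3))
    (v' := fun x => (8/3)*x^4 - 2*x*(_root_.artanh x - x))
    (fun x hx => ?_) (by simp [_root_.artanh_zero]) (fun x hx => ?_) hr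
  · have h1 : (-1:ℝ) < x := by linarith [hx.1]
    have h2 : x < 1 := by linarith [hx.2]
    have := ((hasDerivAt_pow 5 x).const_mul (8/15:ℝ)).sub (hasDerivAt_G h1 h2)
    refine this.congr_deriv ?_
    push_cast
    ring
  · have hC := C_nonneg ⟨hx.1.le, hx.2.le⟩
    nlinarith [mul_nonneg hx.1.le hC]

lemma limit_zero :
    Tendsto (fun r : ℝ => (r - (1 - r^2) * _root_.artanh r) / r^3) (𝓝[>] 0) (𝓝 (2/3)) := by
  have hmem : Ioc (0:ℝ) (1/2) ∈ 𝓝[>] (0:ℝ) :=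
    Ioc_mem_nhdsGT_of_mem ⟨le_refl 0, one_half_pos⟩
  have hupper : Tendsto (fun r : ℝ => 2/3 + (8/15)*r^2) (𝓝[>] 0) (𝓝 (2/3)) := by
    have : Tendsto (fun r : ℝ => 2/3 + (8/15)*r^2) (𝓝 0) (𝓝 (2/3 + (8/15)*0^2)) :=
      (continuous_const.add (continuous_const.mul (continuous_pow 2))).tendsto 0
    simpa using this.mono_left nhdsWithin_le_nhds
  refine tendsto_of_tendsto_of_tendsto_of_le_of_le' tendsto_const_nhds hupper ?_ ?_
  · filter_upwards [hmem] with r hr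
    have hG := G_pos ⟨hr.1, by linarith [hr.2]⟩
    have hr3 : (0:ℝ) < r^3 := pow_pos hr.1 3
    rw [le_div_iff₀ hr3]
    linarith
  · filter_upwards [hmem] with r hr
    have hD := D_nonneg ⟨hr.1.le, hr.2⟩
    have hr3 : (0:ℝ) < r^3 := pow_pos hr.1 3
    rw [div_le_iff₀ hr3]
    nlinarith

lemma limit_one :
    Tendsto (fun r : ℝ => (r - (1 - r^2) * _root_.artanh r) / r^3) (𝓝[<] 1) (𝓝 1) := by
  have hmap : Tendsto (fun r : ℝ => 1 - r) (𝓝[<] (1:ℝ)) (𝓝[>] (0:ℝ)) := by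
    rw [tendsto_nhdsWithin_iff]
    constructor
    · have : Tendsto (fun r : ℝ => 1 - r) (𝓝 1) (𝓝 (1-1)) :=
        (continuous_const.sub continuous_id).tendsto 1
      simpa using this.mono_left (nhdsWithin_le_nhds : 𝓝[<] (1:ℝ) ≤ 𝓝 1)
    · filter_upwards [self_mem_nhdsWithin] with x hx
      simp only [mem_Iio] at hx
      simp only [mem_Ioi]
      linarith
  have hxlog : Tendsto (fun x : ℝ => Real.log x * x) (𝓝[>] (0:ℝ)) (𝓝 0) := by
    have := tendsto_log_mul_rpow_nhdsGT_zero one_pos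
    simpa using this
  have T1 : Tendsto (fun r : ℝ => Real.log (1-r) * (1-r)) (𝓝[<] (1:ℝ)) (𝓝 0) :=
    hxlog.comp hmap
  have h1 : Tendsto (fun r : ℝ => r) (𝓝[<] (1:ℝ)) (𝓝 1) :=
    tendsto_id.mono_right nhdsWithin_le_nhds
  have h2 : Tendsto (fun r : ℝ => (1-r^2) * Real.log (1+r)) (𝓝[<] (1:ℝ)) (𝓝 0) := by
    have hc : ContinuousAt (fun r : ℝ => (1-r^2) * Real.log (1+r)) 1 := by
      apply ContinuousAt.mul
      · exact (continuous_const.sub (continuous_pow 2)).continuousAt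
      · exact (Real.continuousAt_log (by norm_num : (1:ℝ)+1 ≠ 0)).comp
          ((continuous_const.add continuous_id).continuousAt)
    have := hc.tendsto.mono_left (nhdsWithin_le_nhds : 𝓝[<] (1:ℝ) ≤ 𝓝 1)
    simpa using this
  have h3 : Tendsto (fun r : ℝ => (1+r) * (Real.log (1-r) * (1-r))) (𝓝[<] (1:ℝ)) (𝓝 0) := by
    have hc : Tendsto (fun r : ℝ => (1:ℝ)+r) (𝓝[<] (1:ℝ)) (𝓝 2) := by
      have : Tendsto (fun r : ℝ => (1:ℝ)+r) (𝓝 1) (𝓝 (1+1)) :=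
        (continuous_const.add continuous_id).tendsto 1
      have := this.mono_left (nhdsWithin_le_nhds : 𝓝[<] (1:ℝ) ≤ 𝓝 1)
      norm_num at this
      exact this
    simpa using hc.mul T1
  have hnum : Tendsto (fun r : ℝ =>
      r - ((1/2) * ((1-r^2) * Real.log (1+r)) - (1/2) * ((1+r) * (Real.log (1-r) * (1-r)))))
      (𝓝[<] (1:ℝ)) (𝓝 1) := by
    have := h1.sub ((h2.const_mul (1/2:ℝ)).sub (h3.const_mul (1/2:ℝ)))
    simpa using this
  have hden : Tendsto (fun r : ℝ => r^3) (𝓝[<] (1:ℝ)) (𝓝 1) := by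
    have := ((continuous_pow 3).tendsto 1).mono_left
      (nhdsWithin_le_nhds : 𝓝[<] (1:ℝ) ≤ 𝓝 1)
    simpa using this
  have hdiv := hnum.div hden one_ne_zero
  norm_num at hdiv
  refine hdiv.congr' ?_
  have hmem : Ioo (0:ℝ) 1 ∈ 𝓝[<] (1:ℝ) := Ioo_mem_nhdsLT_of_mem ⟨zero_lt_one, le_refl 1⟩
  filter_upwards [hmem] with r hr
  simp only [Pi.div_apply]
  rw [artanh_eq (by linarith [hr.1]) hr.2]
  ring

theorem stmt0 :
    StrictMonoOn (fun r : ℝ => (r - (1 - r^2) * _root_.artanh r) / r^3) (Ioo 0 1) ∧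
    ConvexOn ℝ (Ioo 0 1) (fun r : ℝ => (r - (1 - r^2) * _root_.artanh r) / r^3) ∧
    Tendsto (fun r : ℝ => (r - (1 - r^2) * _root_.artanh r) / r^3) (𝓝[>] 0) (𝓝 (2/3)) ∧
    Tendsto (fun r : ℝ => (r - (1 - r^2) * _root_.artanh r) / r^3) (𝓝[<] 1) (𝓝 1) := by
  exact ⟨mono_f, convex_f, limit_zero, limit_one⟩
end

section
/- The function f₆(r) = (r/√(1-r²) - √(1-r²)·artanh(r)) / (artanh(r) - r) is strictly increasing on (0,1), with limit 2 as r→0⁺ and tending to ∞ as r→1⁻. -/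
open Real Set Filter Topology

lemma continuousOn_artanh : ContinuousOn _root_.artanh (Ioo (-1:ℝ) 1) := by
  apply ContinuousOn.mul continuousOn_const
  apply ContinuousOn.log
  · exact ContinuousOn.div (by fun_prop) (by fun_prop)
      (fun x hx => sub_ne_zero.mpr (ne_of_gt hx.2))
  · intro x hx
    have : (0:ℝ) < 1 + x := by linarith [hx.1]
    have : (0:ℝ) < 1 - x := by linarith [hx.2]
    positivity

lemma hasDerivAt_sqrt1 {r : ℝ} (h1 : -1 < r) (h2 : r < 1) :
    HasDerivAt (fun r : ℝ => Real.sqrt (1 - r^2)) (-r / Real.sqrt (1 - r^2)) r := by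
  have hsq : (0:ℝ) < 1 - r^2 := by nlinarith
  have hin : HasDerivAt (fun r : ℝ => 1 - r^2) (-(2*r)) r := by
    simpa using ((hasDerivAt_pow 2 r).const_sub 1)
  have := (Real.hasDerivAt_sqrt hsq.ne').comp r hin
  refine this.congr_deriv ?_
  have hs0 : Real.sqrt (1 - r^2) ≠ 0 := by positivity
  field_simp

noncomputable def Nf (r : ℝ) : ℝ := r / Real.sqrt (1 - r^2) - Real.sqrt (1 - r^2) * _root_.artanh r
noncomputable def Df (r : ℝ) : ℝ := _root_.artanh r - r
noncomputable def gf (r : ℝ) : ℝ := 1 / Real.sqrt (1 - r^2) + Real.sqrt (1 - r^2) * _root_.artanh r / r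

lemma Df_zero : Df 0 = 0 := by simp [Df, _root_.artanh_zero]
lemma Nf_zero : Nf 0 = 0 := by simp [Nf, _root_.artanh_zero]

lemma hasDerivAt_Df {r : ℝ} (h1 : -1 < r) (h2 : r < 1) :
    HasDerivAt Df (r^2/(1-r^2)) r := by
  have hsq : (0:ℝ) < 1 - r^2 := by nlinarith
  have := (hasDerivAt_artanh h1 h2).sub (hasDerivAt_id r)
  refine this.congr_deriv ?_
  field_simp
  ring

lemma hasDerivAt_Nf {r : ℝ} (h : r ∈ Ioo (0:ℝ) 1) :
    HasDerivAt Nf (r^2/(1-r^2) * gf r) r := by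
  obtain ⟨h0, h2⟩ := h
  have h1 : (-1:ℝ) < r := by linarith
  have hsq : (0:ℝ) < 1 - r^2 := by nlinarith
  have hs0 : (0:ℝ) < Real.sqrt (1 - r^2) := Real.sqrt_pos.mpr hsq
  have hA := hasDerivAt_artanh h1 h2
  have hS := hasDerivAt_sqrt1 h1 h2
  have hdiv := (hasDerivAt_id r).div hS hs0.ne'
  have hmul := hS.mul hA
  have := hdiv.sub hmul
  refine this.congr_deriv ?_
  have hs2 : Real.sqrt (1 - r^2) ^ 2 = 1 - r^2 := Real.sq_sqrt hsq.le
  unfold gf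
  simp only [id, Pi.mul_apply]
  set s := Real.sqrt (1 - r^2) with hs
  rw [← hs2]
  field_simp
  ring

lemma hasDerivAt_gf {r : ℝ} (h : r ∈ Ioo (0:ℝ) 1) :
    HasDerivAt gf ((r^3/(1-r^2) - (_root_.artanh r - r)) / (Real.sqrt (1-r^2) * r^2)) r := by
  obtain ⟨h0, h2⟩ := h
  have h1 : (-1:ℝ) < r := by linarith
  have hsq : (0:ℝ) < 1 - r^2 := by nlinarith
  have hs0 : (0:ℝ) < Real.sqrt (1 - r^2) := Real.sqrt_pos.mpr hsq
  have hA := hasDerivAt_artanh h1 h2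
  have hS := hasDerivAt_sqrt1 h1 h2
  have hinv := (hasDerivAt_const r (1:ℝ)).div hS hs0.ne'
  have hmul := (hS.mul hA).div (hasDerivAt_id r) h0.ne'
  have := hinv.add hmul
  refine this.congr_deriv ?_
  have hs2 : Real.sqrt (1 - r^2) ^ 2 = 1 - r^2 := Real.sq_sqrt hsq.le
  simp only [id, Pi.mul_apply]
  set s := Real.sqrt (1 - r^2) with hs
  rw [← hs2]
  field_simp
  linear_combination (-(_root_.artanh r * s^2)) * hs2

lemma continuousOn_Nf : ContinuousOn Nf (Ico (0:ℝ) 1) := by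
  have h1 : ∀ x ∈ Ico (0:ℝ) 1, (0:ℝ) < 1 - x^2 := fun x hx => by nlinarith [hx.1, hx.2]
  have hsqrt : ContinuousOn (fun x : ℝ => Real.sqrt (1 - x^2)) (Ico (0:ℝ) 1) :=
    Real.continuous_sqrt.comp_continuousOn (by fun_prop)
  have hart : ContinuousOn _root_.artanh (Ico (0:ℝ) 1) :=
    continuousOn_artanh.mono (fun x hx => ⟨by linarith [hx.1], hx.2⟩)
  exact (continuousOn_id.div hsqrt (fun x hx => (Real.sqrt_pos.mpr (h1 x hx)).ne')).sub
    (hsqrt.mul hart)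

lemma continuousOn_Df : ContinuousOn Df (Ico (0:ℝ) 1) :=
  (continuousOn_artanh.mono (fun x hx => ⟨by linarith [hx.1], hx.2⟩)).sub continuousOn_id

lemma key_ineq {r : ℝ} (h : r ∈ Ioo (0:ℝ) 1) : _root_.artanh r - r < r^3/(1-r^2) := by
  set H : ℝ → ℝ := fun x => x^3/(1-x^2) + x - _root_.artanh x with hH
  have hmono : StrictMonoOn H (Ico (0:ℝ) 1) := by
    apply strictMonoOn_of_hasDerivWithinAt_pos (convex_Ico 0 1)
      (f' := fun x => 2*x^2/(1-x^2)^2)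
    · have h1 : ∀ x ∈ Ico (0:ℝ) 1, (1:ℝ) - x^2 ≠ 0 := fun x hx => by nlinarith [hx.1, hx.2]
      have hart : ContinuousOn _root_.artanh (Ico (0:ℝ) 1) :=
        continuousOn_artanh.mono (fun x hx => ⟨by linarith [hx.1], hx.2⟩)
      exact (((by fun_prop : ContinuousOn (fun x:ℝ => x^3) _).div (by fun_prop) h1).add
        continuousOn_id).sub hart
    · rw [interior_Ico]
      intro x hx
      have h1 : (-1:ℝ) < x := by linarith [hx.1]
      have hsq : (0:ℝ) < 1 - x^2 := by nlinarith [hx.1, hx.2]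
      have hd : HasDerivAt H (2*x^2/(1-x^2)^2) x := by
        have hin : HasDerivAt (fun y : ℝ => 1 - y^2) (-(2*x)) x := by
          simpa using ((hasDerivAt_pow 2 x).const_sub 1)
        have h3 := ((hasDerivAt_pow 3 x).div hin hsq.ne')
        have := (h3.add (hasDerivAt_id x)).sub (hasDerivAt_artanh h1 hx.2)
        refine this.congr_deriv ?_
        field_simp
        ring
      exact hd.hasDerivWithinAt
    · rw [interior_Ico]
      intro x hx
      have hsq : (0:ℝ) < 1 - x^2 := by nlinarith [hx.1, hx.2]
      have : (0:ℝ) < x := hx.1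
      exact div_pos (by nlinarith) (pow_pos hsq 2)
  have h0 : H 0 = 0 := by simp [hH, _root_.artanh_zero]
  have := hmono (left_mem_Ico.mpr one_pos) ⟨h.1.le, h.2⟩ h.1
  rw [h0] at this
  simp only [hH] at this
  linarith

lemma gf_strictMono : StrictMonoOn gf (Ioo (0:ℝ) 1) := by
  apply strictMonoOn_of_hasDerivWithinAt_pos (convex_Ioo 0 1)
    (f' := fun x => (x^3/(1-x^2) - (_root_.artanh x - x)) / (Real.sqrt (1-x^2) * x^2))
  · exact fun x hx => (hasDerivAt_gf hx).continuousAt.continuousWithinAt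
  · rw [interior_Ioo]
    exact fun x hx => (hasDerivAt_gf hx).hasDerivWithinAt
  · rw [interior_Ioo]
    intro x hx
    have hsq : (0:ℝ) < 1 - x^2 := by nlinarith [hx.1, hx.2]
    have hnum : 0 < x^3/(1-x^2) - (_root_.artanh x - x) := sub_pos.mpr (key_ineq hx)
    have hden : 0 < Real.sqrt (1-x^2) * x^2 :=
      mul_pos (Real.sqrt_pos.mpr hsq) (pow_pos hx.1 2)
    exact div_pos hnum hden

lemma Df_strictMono : StrictMonoOn Df (Ico (0:ℝ) 1) := by
  apply strictMonoOn_of_hasDerivWithinAt_pos (convex_Ico 0 1)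
    (f' := fun x => x^2/(1-x^2)) continuousOn_Df
  · rw [interior_Ico]
    exact fun x hx => (hasDerivAt_Df (by linarith [hx.1]) hx.2).hasDerivWithinAt
  · rw [interior_Ico]
    intro x hx
    have hsq : (0:ℝ) < 1 - x^2 := by nlinarith [hx.1, hx.2]
    exact div_pos (pow_pos hx.1 2) hsq

lemma Df_pos {r : ℝ} (h : r ∈ Ioo (0:ℝ) 1) : 0 < Df r := by
  have := Df_strictMono (left_mem_Ico.mpr one_pos) ⟨h.1.le, h.2⟩ h.1
  rwa [Df_zero] at this

lemma mvt_ND {a b : ℝ} (ha : 0 ≤ a) (hab : a < b) (hb : b < 1) :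
    ∃ c ∈ Ioo a b, Nf b - Nf a = (Df b - Df a) * gf c := by
  have hsub : Icc a b ⊆ Ico (0:ℝ) 1 := fun x hx => ⟨le_trans ha hx.1, lt_of_le_of_lt hx.2 hb⟩
  have hsub2 : Ioo a b ⊆ Ioo (0:ℝ) 1 := fun x hx => ⟨lt_of_le_of_lt ha hx.1, lt_trans hx.2 hb⟩
  obtain ⟨c, hc, hcc⟩ := exists_ratio_hasDerivAt_eq_ratio_slope Nf
    (fun x => x^2/(1-x^2) * gf x) hab (continuousOn_Nf.mono hsub)
    (fun x hx => hasDerivAt_Nf (hsub2 hx)) Df (fun x => x^2/(1-x^2))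
    (continuousOn_Df.mono hsub)
    (fun x hx => hasDerivAt_Df (by linarith [(hsub2 hx).1]) (hsub2 hx).2)
  refine ⟨c, hc, ?_⟩
  have hc01 := hsub2 hc
  have hsq : (0:ℝ) < 1 - c^2 := by nlinarith [hc01.1, hc01.2]
  have hne : c^2/(1-c^2) ≠ 0 := ne_of_gt (div_pos (pow_pos hc01.1 2) hsq)
  field_simp at hcc
  apply mul_right_cancel₀ hne
  linear_combination (-(1/(1-c^2))) * hcc

lemma gf_pos {r : ℝ} (h : r ∈ Ioo (0:ℝ) 1) : 0 < gf r := by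
  have hsq : (0:ℝ) < 1 - r^2 := by nlinarith [h.1, h.2]
  have hs : (0:ℝ) < Real.sqrt (1 - r^2) := Real.sqrt_pos.mpr hsq
  have hA : (0:ℝ) < _root_.artanh r := by
    have := Df_pos h
    unfold Df at this
    linarith [h.1]
  unfold gf
  have : 0 < Real.sqrt (1 - r^2) * _root_.artanh r / r := div_pos (mul_pos hs hA) h.1
  positivity

lemma repr_f {b : ℝ} (hb : b ∈ Ioo (0:ℝ) 1) : ∃ c ∈ Ioo 0 b, Nf b = Df b * gf c := by
  obtain ⟨c, hc, hcc⟩ := mvt_ND le_rfl hb.1 hb.2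
  rw [Nf_zero, Df_zero, sub_zero, sub_zero] at hcc
  exact ⟨c, hc, hcc⟩

lemma Nf_pos {r : ℝ} (h : r ∈ Ioo (0:ℝ) 1) : 0 < Nf r := by
  obtain ⟨c, hc, hcc⟩ := repr_f h
  rw [hcc]
  exact mul_pos (Df_pos h) (gf_pos ⟨hc.1, lt_trans hc.2 h.2⟩)

lemma f_strictMono : StrictMonoOn (fun r => Nf r / Df r) (Ioo (0:ℝ) 1) := by
  intro a ha b hb hab
  obtain ⟨c₁, hc₁, h₁⟩ := repr_f ha
  obtain ⟨c₂, hc₂, h₂⟩ := mvt_ND ha.1.le hab hb.2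
  have hDa := Df_pos ha
  have hDb := Df_pos hb
  have hDab : Df a < Df b := Df_strictMono ⟨ha.1.le, ha.2⟩ ⟨(lt_trans ha.1 hab).le, hb.2⟩ hab
  have hg : gf c₁ < gf c₂ :=
    gf_strictMono ⟨hc₁.1, lt_trans hc₁.2 ha.2⟩ ⟨lt_trans ha.1 hc₂.1, lt_trans hc₂.2 hb.2⟩
      (lt_trans hc₁.2 hc₂.1)
  simp only []
  rw [div_lt_div_iff₀ hDa hDb]
  have : Nf b = Nf a + (Df b - Df a) * gf c₂ := by linarith [h₂]
  rw [this, h₁]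
  nlinarith [mul_lt_mul_of_pos_left hg (mul_pos hDa (sub_pos.mpr hDab))]

lemma tendsto_artanh_div : Tendsto (fun r => _root_.artanh r / r) (𝓝[>] (0:ℝ)) (𝓝 1) := by
  have hd : HasDerivAt _root_.artanh 1 0 := by
    have := hasDerivAt_artanh (by norm_num : (-1:ℝ) < 0) one_pos
    simpa using this
  have := hasDerivAt_iff_tendsto_slope.mp hd
  have h2 : Tendsto (slope _root_.artanh 0) (𝓝[>] (0:ℝ)) (𝓝 1) :=
    this.mono_left (nhdsWithin_mono 0 (fun x hx => ne_of_gt hx))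
  apply h2.congr'
  filter_upwards [self_mem_nhdsWithin] with x hx
  simp [slope_def_field, _root_.artanh_zero]

lemma tendsto_gf_zero : Tendsto gf (𝓝[>] (0:ℝ)) (𝓝 2) := by
  have hsqrt : Tendsto (fun r : ℝ => Real.sqrt (1 - r^2)) (𝓝 0) (𝓝 1) := by
    have : Continuous (fun r : ℝ => Real.sqrt (1 - r^2)) :=
      Real.continuous_sqrt.comp (by continuity)
    simpa using this.tendsto 0
  have hs' : Tendsto (fun r : ℝ => Real.sqrt (1 - r^2)) (𝓝[>] (0:ℝ)) (𝓝 1) :=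
    hsqrt.mono_left nhdsWithin_le_nhds
  have h1 := (tendsto_const_nhds (x := (1:ℝ)) (f := 𝓝[>] (0:ℝ))).div hs' one_ne_zero
  have h2 : Tendsto (fun r : ℝ => Real.sqrt (1 - r^2) * _root_.artanh r / r) (𝓝[>] (0:ℝ)) (𝓝 1) := by
    have := hs'.mul tendsto_artanh_div
    simp only [one_mul] at this
    apply this.congr
    intro x
    rw [mul_div_assoc]
  have h3 := h1.add h2
  norm_num at h3
  apply h3.congr
  intro x
  simp [gf, one_div, Pi.div_apply, Pi.add_apply]

lemma gf_ge_two {r : ℝ} (h : r ∈ Ioo (0:ℝ) 1) : 2 ≤ gf r := by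
  apply le_of_tendsto tendsto_gf_zero
  filter_upwards [Ioo_mem_nhdsGT_of_mem (left_mem_Ico.mpr h.1)] with u hu
  exact (gf_strictMono ⟨hu.1, lt_trans hu.2 h.2⟩ h hu.2).le

lemma f_eq_g {r : ℝ} (h : r ∈ Ioo (0:ℝ) 1) : ∃ c ∈ Ioo 0 r, Nf r / Df r = gf c := by
  obtain ⟨c, hc, hcc⟩ := repr_f h
  exact ⟨c, hc, by rw [hcc, mul_comm, mul_div_assoc, div_self (Df_pos h).ne', mul_one]⟩

lemma tendsto_f_zero : Tendsto (fun r => Nf r / Df r) (𝓝[>] (0:ℝ)) (𝓝 2) := by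
  have hmem : Ioo (0:ℝ) 1 ∈ 𝓝[>] (0:ℝ) := Ioo_mem_nhdsGT_of_mem (left_mem_Ico.mpr one_pos)
  apply tendsto_of_tendsto_of_tendsto_of_le_of_le' tendsto_const_nhds tendsto_gf_zero
  · filter_upwards [hmem] with r hr
    obtain ⟨c, hc, hcc⟩ := f_eq_g hr
    rw [hcc]
    exact gf_ge_two ⟨hc.1, lt_trans hc.2 hr.2⟩
  · filter_upwards [hmem] with r hr
    obtain ⟨c, hc, hcc⟩ := f_eq_g hr
    rw [hcc]
    exact (gf_strictMono ⟨hc.1, lt_trans hc.2 hr.2⟩ hr hc.2).le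

lemma tendsto_sqrt_mul_log : Tendsto (fun t : ℝ => Real.sqrt t * Real.log t) (𝓝[>] (0:ℝ)) (𝓝 0) := by
  have := tendsto_log_mul_rpow_nhdsGT_zero (by norm_num : (0:ℝ) < 1/2)
  apply this.congr'
  filter_upwards [self_mem_nhdsWithin] with t _
  rw [Real.sqrt_eq_rpow, mul_comm]

lemma tendsto_one_sub : Tendsto (fun r : ℝ => 1 - r) (𝓝[<] (1:ℝ)) (𝓝[>] (0:ℝ)) := by
  rw [tendsto_nhdsWithin_iff]
  constructor
  · have : Tendsto (fun r : ℝ => 1 - r) (𝓝 1) (𝓝 (1 - 1)) := (continuous_const.sub continuous_id).tendsto 1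
    simpa using this.mono_left nhdsWithin_le_nhds
  · filter_upwards [self_mem_nhdsWithin] with r hr
    have hr1 : r < 1 := hr
    simpa using sub_pos.mpr hr1

lemma tendsto_sA : Tendsto (fun r : ℝ => Real.sqrt (1 - r^2) * _root_.artanh r) (𝓝[<] (1:ℝ)) (𝓝 0) := by
  have hmem : Ioo (0:ℝ) 1 ∈ 𝓝[<] (1:ℝ) := Ioo_mem_nhdsLT_of_mem (right_mem_Ioc.mpr one_pos)
  have heq : ∀ r ∈ Ioo (0:ℝ) 1, Real.sqrt (1 - r^2) * _root_.artanh r =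
      (1/2) * (Real.sqrt (1+r) * (Real.sqrt (1-r) * Real.log (1+r))
        - Real.sqrt (1+r) * (Real.sqrt (1-r) * Real.log (1-r))) := by
    intro r hr
    have hp : (0:ℝ) < 1 + r := by linarith [hr.1]
    have hm : (0:ℝ) < 1 - r := by linarith [hr.2]
    have h1 : (1:ℝ) - r^2 = (1+r) * (1-r) := by ring
    rw [_root_.artanh, h1, Real.sqrt_mul hp.le, Real.log_div hp.ne' hm.ne']
    ring
  have hA : Tendsto (fun r : ℝ => Real.sqrt (1+r)) (𝓝[<] (1:ℝ)) (𝓝 (Real.sqrt 2)) := by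
    have : Continuous (fun r : ℝ => Real.sqrt (1+r)) :=
      Real.continuous_sqrt.comp (by continuity)
    have := this.tendsto 1
    norm_num at this
    exact this.mono_left nhdsWithin_le_nhds
  have hB : Tendsto (fun r : ℝ => Real.sqrt (1-r) * Real.log (1+r)) (𝓝[<] (1:ℝ)) (𝓝 0) := by
    have hs : Tendsto (fun r : ℝ => Real.sqrt (1-r)) (𝓝 (1:ℝ)) (𝓝 0) := by
      have : Continuous (fun r : ℝ => Real.sqrt (1-r)) :=
        Real.continuous_sqrt.comp (by continuity)
      have := this.tendsto 1
      norm_num at this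
      exact this
    have hl : Tendsto (fun r : ℝ => Real.log (1+r)) (𝓝 (1:ℝ)) (𝓝 (Real.log 2)) := by
      have : ContinuousAt (fun r : ℝ => Real.log (1+r)) 1 :=
        (Real.continuousAt_log (by norm_num)).comp (by fun_prop)
      have := this.tendsto
      norm_num at this
      exact this
    have := (hs.mul hl).mono_left (nhdsWithin_le_nhds (s := Iio (1:ℝ)))
    simpa using this
  have hC : Tendsto (fun r : ℝ => Real.sqrt (1-r) * Real.log (1-r)) (𝓝[<] (1:ℝ)) (𝓝 0) :=
    tendsto_sqrt_mul_log.comp tendsto_one_sub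
  have htot := ((hA.mul hB).sub (hA.mul hC)).const_mul (1/2 : ℝ)
  norm_num at htot
  apply htot.congr'
  filter_upwards [hmem] with r hr
  exact (heq r hr).symm

lemma artanh_pos {r : ℝ} (h : r ∈ Ioo (0:ℝ) 1) : 0 < _root_.artanh r := by
  have := Df_pos h
  unfold Df at this
  linarith [h.1]

lemma tendsto_f_one : Tendsto (fun r => Nf r / Df r) (𝓝[<] (1:ℝ)) atTop := by
  have hmem : Ioo (0:ℝ) 1 ∈ 𝓝[<] (1:ℝ) := Ioo_mem_nhdsLT_of_mem (right_mem_Ioc.mpr one_pos)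
  have hsA : Tendsto (fun r : ℝ => Real.sqrt (1 - r^2) * _root_.artanh r) (𝓝[<] (1:ℝ)) (𝓝[>] (0:ℝ)) := by
    rw [tendsto_nhdsWithin_iff]
    refine ⟨tendsto_sA, ?_⟩
    filter_upwards [hmem] with r hr
    have hsq : (0:ℝ) < 1 - r^2 := by nlinarith [hr.1, hr.2]
    exact mem_Ioi.mpr (mul_pos (Real.sqrt_pos.mpr hsq) (artanh_pos hr))
  have hinv : Tendsto (fun r : ℝ => (Real.sqrt (1 - r^2) * _root_.artanh r)⁻¹) (𝓝[<] (1:ℝ)) atTop :=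
    tendsto_inv_nhdsGT_zero.comp hsA
  have hr1 : Tendsto (fun r : ℝ => r) (𝓝[<] (1:ℝ)) (𝓝 1) := tendsto_id.mono_left nhdsWithin_le_nhds
  have hmul : Tendsto (fun r : ℝ => r * (Real.sqrt (1 - r^2) * _root_.artanh r)⁻¹) (𝓝[<] (1:ℝ)) atTop :=
    Filter.Tendsto.pos_mul_atTop one_pos hr1 hinv
  have hneg : Tendsto (fun r : ℝ => -Real.sqrt (1 - r^2)) (𝓝[<] (1:ℝ)) (𝓝 0) := by
    have : Continuous (fun r : ℝ => Real.sqrt (1 - r^2)) := Real.continuous_sqrt.comp (by continuity)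
    have h2 := (this.tendsto 1).mono_left (nhdsWithin_le_nhds (s := Iio (1:ℝ)))
    norm_num at h2
    simpa using h2.neg
  have hlow : Tendsto (fun r : ℝ => r * (Real.sqrt (1 - r^2) * _root_.artanh r)⁻¹ - Real.sqrt (1 - r^2))
      (𝓝[<] (1:ℝ)) atTop := by
    have := hmul.atTop_add hneg
    apply this.congr
    intro r
    ring
  apply tendsto_atTop_mono' _ _ hlow
  filter_upwards [hmem] with r hr
  have hsq : (0:ℝ) < 1 - r^2 := by nlinarith [hr.1, hr.2]
  have hs0 : (0:ℝ) < Real.sqrt (1 - r^2) := Real.sqrt_pos.mpr hsq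
  have hA : 0 < _root_.artanh r := artanh_pos hr
  have hD : 0 < Df r := Df_pos hr
  have hDA : Df r ≤ _root_.artanh r := by unfold Df; linarith [hr.1]
  have hN : 0 < Nf r := Nf_pos hr
  have h1 : Nf r / _root_.artanh r ≤ Nf r / Df r := by
    apply div_le_div_of_nonneg_left hN.le hD hDA
  have h2 : Nf r / _root_.artanh r = r * (Real.sqrt (1 - r^2) * _root_.artanh r)⁻¹ - Real.sqrt (1 - r^2) := by
    unfold Nf
    field_simp
  linarith [h1, h2]

theorem stmt4 :
    StrictMonoOn (fun r : ℝ =>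
      (r / Real.sqrt (1 - r^2) - Real.sqrt (1 - r^2) * _root_.artanh r) / (_root_.artanh r - r)) (Ioo 0 1) ∧
    Tendsto (fun r : ℝ =>
      (r / Real.sqrt (1 - r^2) - Real.sqrt (1 - r^2) * _root_.artanh r) / (_root_.artanh r - r)) (𝓝[>] 0) (𝓝 2) ∧
    Tendsto (fun r : ℝ =>
      (r / Real.sqrt (1 - r^2) - Real.sqrt (1 - r^2) * _root_.artanh r) / (_root_.artanh r - r)) (𝓝[<] 1) atTop := by
  have he : (fun r : ℝ =>
      (r / Real.sqrt (1 - r^2) - Real.sqrt (1 - r^2) * _root_.artanh r) / (_root_.artanh r - r))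
      = fun r => Nf r / Df r := rfl
  rw [he]
  exact ⟨f_strictMono, tendsto_f_zero, tendsto_f_one⟩
end

section
/- For all r ∈ (0,1), (13 - 9r²)·(artanh(r)/r) - 13 + 6r² > (14/15)·r². -/
open Real Set Filter Topology

noncomputable def myF (x : ℝ) : ℝ :=
  (1/2) * (Real.log (1+x) - Real.log (1-x)) -
    (x + x^3/3 + x^5/5 + x^7/7 + x^9/9 + x^11/11 + x^13/13 + x^15/15 + x^17/17)

lemma myF_hasDeriv {x : ℝ} (hx : x ∈ Ioo (-1:ℝ) 1) :
    HasDerivAt myF (x^18 / (1 - x^2)) x := by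
  obtain ⟨hm, hp⟩ := hx
  have h1x : (0:ℝ) < 1 + x := by linarith
  have h2x : (0:ℝ) < 1 - x := by linarith
  have hlog1 : HasDerivAt (fun x : ℝ => Real.log (1+x)) (1/(1+x)) x := by
    have := (((hasDerivAt_id x).const_add 1).log h1x.ne')
    simpa using this
  have hlog2 : HasDerivAt (fun x : ℝ => Real.log (1-x)) (-(1/(1-x))) x := by
    have := (((hasDerivAt_id x).const_sub 1).log h2x.ne')
    have h : (-1) / (1 - x) = -(1/(1-x)) := by ring
    simpa [h] using this
  have hpoly : HasDerivAt
      (fun x : ℝ => x + x^3/3 + x^5/5 + x^7/7 + x^9/9 + x^11/11 + x^13/13 + x^15/15 + x^17/17)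
      (1 + x^2 + x^4 + x^6 + x^8 + x^10 + x^12 + x^14 + x^16) x := by
    have h : HasDerivAt
        (fun x : ℝ => x + x^3/3 + x^5/5 + x^7/7 + x^9/9 + x^11/11 + x^13/13 + x^15/15 + x^17/17)
        (1 + (↑3*x^2)/3 + (↑5*x^4)/5 + (↑7*x^6)/7 + (↑9*x^8)/9 + (↑11*x^10)/11 + (↑13*x^12)/13
          + (↑15*x^14)/15 + (↑17*x^16)/17) x := by
      exact ((((((((hasDerivAt_id x).add ((hasDerivAt_pow 3 x).div_const 3)).add
        ((hasDerivAt_pow 5 x).div_const 5)).add ((hasDerivAt_pow 7 x).div_const 7)).add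
        ((hasDerivAt_pow 9 x).div_const 9)).add ((hasDerivAt_pow 11 x).div_const 11)).add
        ((hasDerivAt_pow 13 x).div_const 13)).add ((hasDerivAt_pow 15 x).div_const 15)).add
        ((hasDerivAt_pow 17 x).div_const 17)
    convert h using 1
    push_cast
    ring
  have h := (((hlog1.sub hlog2).const_mul (1/2:ℝ)).sub hpoly)
  refine h.congr_deriv ?_
  have hne : (1:ℝ) - x^2 ≠ 0 := by nlinarith
  field_simp
  ring

lemma artanh_lb {r : ℝ} (hr : r ∈ Ioo (0:ℝ) 1) :
    r + r^3/3 + r^5/5 + r^7/7 + r^9/9 + r^11/11 + r^13/13 + r^15/15 + r^17/17 < _root_.artanh r := by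
  obtain ⟨h0, h1⟩ := hr
  have hmono : StrictMonoOn myF (Ico (0:ℝ) 1) := by
    apply strictMonoOn_of_deriv_pos (convex_Ico 0 1)
    · intro x hx
      exact (myF_hasDeriv ⟨by linarith [hx.1], hx.2⟩).differentiableAt.continuousAt.continuousWithinAt
    · intro x hx
      rw [interior_Ico] at hx
      rw [(myF_hasDeriv ⟨by linarith [hx.1], hx.2⟩).deriv]
      have h2 : (0:ℝ) < 1 - x^2 := by nlinarith [hx.1, hx.2]
      exact div_pos (pow_pos hx.1 18) h2
  have key : myF 0 < myF r := hmono ⟨le_refl 0, by norm_num⟩ ⟨h0.le, h1⟩ h0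
  have hF0 : myF 0 = 0 := by simp [myF]
  have hFr : myF r = _root_.artanh r -
      (r + r^3/3 + r^5/5 + r^7/7 + r^9/9 + r^11/11 + r^13/13 + r^15/15 + r^17/17) := by
    unfold myF _root_.artanh
    rw [Real.log_div (by linarith) (by linarith)]
  rw [hF0, hFr] at key
  linarith

theorem stmt7 : ∀ r ∈ Ioo (0:ℝ) 1,
    (13 - 9*r^2) * (_root_.artanh r / r) - 13 + 6*r^2 > (14/15) * r^2 := by
  intro r hr
  obtain ⟨h0, h1⟩ := hr
  have hlb := artanh_lb ⟨h0, h1⟩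
  have hdiv : 1 + r^2/3 + r^4/5 + r^6/7 + r^8/9 + r^10/11 + r^12/13 + r^14/15 + r^16/17
      < _root_.artanh r / r := by
    rw [lt_div_iff₀ h0]
    nlinarith [hlb]
  have hc : (0:ℝ) < 13 - 9*r^2 := by nlinarith
  have hmul : (13 - 9*r^2) * (1 + r^2/3 + r^4/5 + r^6/7 + r^8/9 + r^10/11 + r^12/13 + r^14/15 + r^16/17)
      < (13 - 9*r^2) * (_root_.artanh r / r) := by
    exact (mul_lt_mul_iff_right₀ hc).mpr hdiv
  have hpoly : (14/15) * r^2 + 13 - 6*r^2 ≤ (13 - 9*r^2) *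
      (1 + r^2/3 + r^4/5 + r^6/7 + r^8/9 + r^10/11 + r^12/13 + r^14/15 + r^16/17) := by
    have h18 : ∀ k : ℕ, k ≤ 18 → r^18 ≤ r^k := fun k hk =>
      pow_le_pow_of_le_one h0.le h1.le hk
    have hr2 : r^2 ≤ 1 := by nlinarith
    have hy : 0 ≤ r^2 * (1 - r^2) := mul_nonneg (sq_nonneg r) (by linarith)
    nlinarith [h18 6 (by norm_num), h18 8 (by norm_num), h18 10 (by norm_num),
      h18 12 (by norm_num), h18 14 (by norm_num), h18 16 (by norm_num), hy,
      pow_pos h0 18]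
  linarith [hmul, hpoly]
end

section
/- For all r ∈ (0,1), (1 - 5r²)·(artanh(r)/r) - 1 + 2r² < -(8/3)·r². -/
open Real Set Filter Topology

lemma artanh_hasDerivAt : ∀ x ∈ Ioo (-1:ℝ) 1, HasDerivAt _root_.artanh (1/(1-x^2)) x := by
  intro x hx
  have h1 : (0:ℝ) < 1 + x := by linarith [hx.1]
  have h2 : (0:ℝ) < 1 - x := by linarith [hx.2]
  have d1 : HasDerivAt (fun y : ℝ => Real.log (1+y)) (1/(1+x)) x := by
    have h := ((hasDerivAt_id x).const_add (1:ℝ)).log (by positivity)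
    simpa using h
  have d2 : HasDerivAt (fun y : ℝ => Real.log (1-y)) (-1/(1-x)) x := by
    have h := ((hasDerivAt_id x).const_sub (1:ℝ)).log (by positivity)
    simpa using h
  have key : HasDerivAt (fun y : ℝ => (1/2) * (Real.log (1+y) - Real.log (1-y)))
      (1/(1-x^2)) x := by
    have h := (d1.sub d2).const_mul (1/2 : ℝ)
    have hne : (1:ℝ) - x^2 ≠ 0 := by nlinarith [hx.1, hx.2]
    refine h.congr_deriv ?_
    field_simp
    ring
  apply key.congr_of_eventuallyEq
  filter_upwards [Ioo_mem_nhds hx.1 hx.2] with y hy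
  have hy1 : (0:ℝ) < 1 + y := by linarith [hy.1]
  have hy2 : (0:ℝ) < 1 - y := by linarith [hy.2]
  unfold _root_.artanh
  rw [Real.log_div (by linarith) (by linarith)]

lemma artanh_lower : ∀ r ∈ Ioo (0:ℝ) 1, r + r^3/3 < _root_.artanh r := by
  intro r hr
  have hmono : StrictMonoOn (fun x : ℝ => _root_.artanh x - (x + x^3/3)) (Ico 0 1) := by
    apply strictMonoOn_of_deriv_pos (convex_Ico 0 1)
    · intro x hx
      have hx' : x ∈ Ioo (-1:ℝ) 1 := ⟨by linarith [hx.1], hx.2⟩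
      exact ((artanh_hasDerivAt x hx').sub
        ((hasDerivAt_id x).add ((hasDerivAt_pow 3 x).div_const 3))).continuousAt.continuousWithinAt
    · rw [interior_Ico]
      intro x hx
      have hx' : x ∈ Ioo (-1:ℝ) 1 := ⟨by linarith [hx.1], hx.2⟩
      have hD : HasDerivAt (fun x : ℝ => _root_.artanh x - (x + x^3/3))
          (1/(1-x^2) - (1 + 3*x^(3-1)/3)) x :=
        (artanh_hasDerivAt x hx').sub
          ((hasDerivAt_id x).add (((hasDerivAt_pow 3 x)).div_const 3))
      rw [hD.deriv]
      have h2 : (0:ℝ) < 1 - x^2 := by nlinarith [hx.1, hx.2]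
      have : (1:ℝ) + 3*x^(3-1)/3 < 1/(1-x^2) := by
        rw [lt_div_iff₀ h2]
        have hx0 : 0 < x := hx.1
        nlinarith [pow_pos hx0 4]
      linarith
  have h := hmono (left_mem_Ico.mpr one_pos) ⟨hr.1.le, hr.2⟩ hr.1
  simp only [_root_.artanh_zero] at h
  norm_num at h
  linarith [h]

lemma artanh_upper : ∀ r ∈ Ioo (0:ℝ) 1, (1-r^2) * _root_.artanh r < r - (2/3)*r^3 := by
  intro r hr
  have hmono : StrictMonoOn (fun x : ℝ => x - (2/3)*x^3 - (1-x^2)*_root_.artanh x) (Ico 0 1) := by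
    apply strictMonoOn_of_deriv_pos (convex_Ico 0 1)
    · intro x hx
      have hx' : x ∈ Ioo (-1:ℝ) 1 := ⟨by linarith [hx.1], hx.2⟩
      exact (((hasDerivAt_id x).sub ((hasDerivAt_pow 3 x).const_mul (2/3))).sub
        (((hasDerivAt_const x 1).sub (hasDerivAt_pow 2 x)).mul
          (artanh_hasDerivAt x hx'))).continuousAt.continuousWithinAt
    · rw [interior_Ico]
      intro x hx
      have hx' : x ∈ Ioo (-1:ℝ) 1 := ⟨by linarith [hx.1], hx.2⟩
      have h2 : (0:ℝ) < 1 - x^2 := by nlinarith [hx.1, hx.2]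
      have hD : HasDerivAt (fun x : ℝ => x - (2/3)*x^3 - (1-x^2)*_root_.artanh x)
          (2*x*_root_.artanh x - 2*x^2) x := by
        have h := ((hasDerivAt_id x).sub ((hasDerivAt_pow 3 x).const_mul (2/3))).sub
          (((hasDerivAt_const x 1).sub (hasDerivAt_pow 2 x)).mul (artanh_hasDerivAt x hx'))
        refine h.congr_deriv ?_
        have : (1:ℝ) - x^2 ≠ 0 := ne_of_gt h2
        simp only [Pi.sub_apply]
        field_simp
        ring
      rw [hD.deriv]
      have hL := artanh_lower x hx
      have hx0 : 0 < x := hx.1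
      nlinarith [hL]
  have h := hmono (left_mem_Ico.mpr one_pos) ⟨hr.1.le, hr.2⟩ hr.1
  simp only [_root_.artanh_zero] at h
  norm_num at h
  nlinarith [h]

theorem stmt8 : ∀ r ∈ Ioo (0:ℝ) 1,
    (1 - 5*r^2) * (_root_.artanh r / r) - 1 + 2*r^2 < -(8/3) * r^2 := by
  intro r hr
  obtain ⟨hr0, hr1⟩ := hr
  have ha := artanh_lower r ⟨hr0, hr1⟩
  have hb := artanh_upper r ⟨hr0, hr1⟩
  have h2 : (0:ℝ) < 1 - r^2 := by nlinarith
  have key : (1 - 5*r^2) * _root_.artanh r < r - (14/3)*r^3 := by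
    rcases le_or_gt 0 (1 - 5*r^2) with h | h
    · have hmul := mul_le_mul_of_nonneg_left hb.le h
      nlinarith [pow_pos hr0 5, mul_pos h2 (pow_pos hr0 3)]
    · have hmul := mul_lt_mul_of_neg_left ha h
      nlinarith [pow_pos hr0 5]
  have hlt : (1 - 5*r^2) * (_root_.artanh r / r) < 1 - (14/3)*r^2 := by
    rw [mul_div_assoc', div_lt_iff₀ hr0]
    nlinarith [key]
  linarith
end

section
/- The function f₁₄(r) = [3(1-r²) - (3 - 4r² - r⁴)·(artanh(r)/r)]/r⁴ has a power series expansion in r² with all coefficients positive (it equals 2·∑_{n≥0} (4n²+20n+13)/((2n+1)(2n+3)(2n+5)) · r^{2n}), with limit 26/15 as r→0⁺. -/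
open Real Set Filter Topology

lemma hasSum_artanh {r : ℝ} (h0 : 0 < r) (h1 : r < 1) :
    HasSum (fun k : ℕ => r^(2*k+1)/(2*(k:ℝ)+1)) (_root_.artanh r) := by
  have habs : |r| < 1 := by rw [abs_of_pos h0]; exact h1
  have H := (hasSum_log_sub_log_of_abs_lt_one habs).mul_left (1/2)
  have h1r : (1:ℝ) - r ≠ 0 := by linarith
  have h2r : (1:ℝ) + r ≠ 0 := by linarith
  have hv : _root_.artanh r = 1/2 * (Real.log (1+r) - Real.log (1-r)) := by
    rw [_root_.artanh, Real.log_div h2r h1r]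
  have heq : (fun k : ℕ => r^(2*k+1)/(2*(k:ℝ)+1))
      = fun i : ℕ => 1/2 * (2 * (1/(2*(i:ℝ)+1)) * r^(2*i+1)) := by
    funext k; ring
  rw [heq, hv]; exact H

lemma hasSum_main {r : ℝ} (h0 : 0 < r) (h1 : r < 1) :
    HasSum (fun n : ℕ => ((4*(n:ℝ)^2+20*n+13) / ((2*n+1)*(2*n+3)*(2*n+5))) * r^(2*n))
      (((1/2)/r) * _root_.artanh r + (2/r^3) * (_root_.artanh r - r)
        - ((3/2)/r^5) * (_root_.artanh r - r - r^3/3)) := by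
  have hA := hasSum_artanh h0 h1
  have hA1 : HasSum (fun k : ℕ => r^(2*(k+1)+1)/(2*((k:ℝ)+1)+1)) (_root_.artanh r - r) := by
    have := (hasSum_nat_add_iff' (f := fun k : ℕ => r^(2*k+1)/(2*(k:ℝ)+1)) 1).mpr hA
    simp only [Finset.range_one, Finset.sum_singleton] at this
    convert this using 2 with k
    · rfl
    · push_cast; ring
    · norm_num
  have hA2 : HasSum (fun k : ℕ => r^(2*(k+2)+1)/(2*((k:ℝ)+2)+1)) (_root_.artanh r - r - r^3/3) := by
    have := (hasSum_nat_add_iff' (f := fun k : ℕ => r^(2*k+1)/(2*(k:ℝ)+1)) 2).mpr hA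
    rw [Finset.sum_range_succ, Finset.sum_range_one] at this
    convert this using 1
    · rfl
    · funext k; push_cast; ring
    · norm_num; ring
  have H := ((hA.mul_left ((1/2)/r)).add (hA1.mul_left (2/r^3))).sub (hA2.mul_left ((3/2)/r^5))
  convert H using 2 with n
  · rfl
  have hr : r ≠ 0 := ne_of_gt h0
  have c1 : (2*(n:ℝ)+1) ≠ 0 := by positivity
  have c3 : (2*(n:ℝ)+3) ≠ 0 := by positivity
  have c5 : (2*(n:ℝ)+5) ≠ 0 := by positivity
  have e1 : r^(2*(n+1)+1) = r^(2*n+1)*r^2 := by ring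
  have e2 : r^(2*(n+2)+1) = r^(2*n+1)*r^4 := by ring
  have e3 : r^(2*n+1) = r^(2*n)*r := by ring
  rw [e1, e2, e3]
  field_simp
  ring

lemma feq {r : ℝ} (h0 : 0 < r) (h1 : r < 1) :
    (3*(1 - r^2) - (3 - 4*r^2 - r^4) * (_root_.artanh r / r)) / r^4 =
      2 * (((1/2)/r) * _root_.artanh r + (2/r^3) * (_root_.artanh r - r)
        - ((3/2)/r^5) * (_root_.artanh r - r - r^3/3)) := by
  have hr : r ≠ 0 := ne_of_gt h0
  field_simp
  ring

theorem stmt10 :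
    (∀ n : ℕ, (0:ℝ) < 2 * ((4*(n:ℝ)^2+20*n+13) / ((2*n+1)*(2*n+3)*(2*n+5)))) ∧
    (∀ r ∈ Ioo (0:ℝ) 1,
      (3*(1 - r^2) - (3 - 4*r^2 - r^4) * (_root_.artanh r / r)) / r^4 =
        2 * ∑' n : ℕ, ((4*(n:ℝ)^2+20*n+13) / ((2*n+1)*(2*n+3)*(2*n+5))) * r^(2*n)) ∧
    Tendsto (fun r : ℝ => (3*(1 - r^2) - (3 - 4*r^2 - r^4) * (_root_.artanh r / r)) / r^4)
      (𝓝[>] 0) (𝓝 (26/15)) := by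
  refine ⟨fun n => by positivity, fun r hr => ?_, ?_⟩
  · obtain ⟨h0, h1⟩ := hr
    rw [(hasSum_main h0 h1).tsum_eq]
    exact feq h0 h1
  · have key : ∀ r ∈ Ioo (0:ℝ) 1,
        |(3*(1 - r^2) - (3 - 4*r^2 - r^4) * (_root_.artanh r / r)) / r^4 - 26/15|
          ≤ 26*r^2/(1-r^2) := by
      intro r ⟨h0, h1⟩
      have hM := hasSum_main h0 h1
      set T := ((1/2)/r) * _root_.artanh r + (2/r^3) * (_root_.artanh r - r)
        - ((3/2)/r^5) * (_root_.artanh r - r - r^3/3) with hT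
      have H1 := (hasSum_nat_add_iff'
        (f := fun n : ℕ => ((4*(n:ℝ)^2+20*n+13) / ((2*n+1)*(2*n+3)*(2*n+5))) * r^(2*n)) 1).mpr hM
      simp only [Finset.range_one, Finset.sum_singleton] at H1
      norm_num at H1
      have hr2 : r^2 < 1 := by nlinarith
      have hG : HasSum (fun n : ℕ => 13*r^2*(r^2)^n) (26*r^2/(1-r^2)/2) := by
        have := (hasSum_geometric_of_lt_one (by positivity) hr2).mul_left (13*r^2)
        convert this using 1
        · rfl
        have hne : (1:ℝ) - r^2 ≠ 0 := by nlinarith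
        field_simp; ring
      have hnn : 0 ≤ T - 13/15 := by
        refine hasSum_le (fun n => ?_) hasSum_zero H1
        positivity
      have hub : T - 13/15 ≤ 26*r^2/(1-r^2)/2 := by
        refine hasSum_le (fun n => ?_) H1 hG
        have hc : (4*((n:ℝ)+1)^2+20*((n:ℝ)+1)+13)
            / ((2*((n:ℝ)+1)+1)*(2*((n:ℝ)+1)+3)*(2*((n:ℝ)+1)+5)) ≤ 13 := by
          rw [div_le_iff₀ (by positivity)]
          have : (0:ℝ) ≤ (n:ℝ) := n.cast_nonneg
          nlinarith
        have he : r^(2*(n+1)) = r^2*(r^2)^n := by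
          rw [← pow_mul]; ring
        calc (4*((n:ℝ)+1)^2+20*((n:ℝ)+1)+13)
              / ((2*((n:ℝ)+1)+1)*(2*((n:ℝ)+1)+3)*(2*((n:ℝ)+1)+5)) * r^(2*(n+1))
            = (4*((n:ℝ)+1)^2+20*((n:ℝ)+1)+13)
              / ((2*((n:ℝ)+1)+1)*(2*((n:ℝ)+1)+3)*(2*((n:ℝ)+1)+5)) * (r^2*(r^2)^n) := by
              rw [he]
          _ ≤ 13 * (r^2*(r^2)^n) := by
              apply mul_le_mul_of_nonneg_right hc (by positivity)
          _ = 13*r^2*(r^2)^n := by ring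
      rw [feq h0 h1, ← hT]
      rw [show 2*T - 26/15 = 2*(T - 13/15) by ring, abs_of_nonneg (by linarith)]
      linarith
    rw [tendsto_iff_dist_tendsto_zero]
    have hmem : Ioo (0:ℝ) 1 ∈ 𝓝[>] (0:ℝ) :=
      Ioo_mem_nhdsGT_of_mem (by norm_num : (0:ℝ) ∈ Ico (0:ℝ) 1)
    refine squeeze_zero' (g := fun r : ℝ => 26*r^2/(1-r^2)) (Eventually.of_forall fun _ => dist_nonneg)
      (Filter.eventually_of_mem hmem fun r hr => ?_) ?_
    · rw [Real.dist_eq]; exact key r hr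
    · have hc : ContinuousAt (fun r : ℝ => 26*r^2/(1-r^2)) 0 := by
        apply ContinuousAt.div (by fun_prop) (by fun_prop)
        norm_num
      have := hc.tendsto.mono_left (nhdsWithin_le_nhds (s := Ioi (0:ℝ)))
      simpa using this
end
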